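/- Let 0 < α < 1/2, define t₀ = 0 and t_n = (1/π²) · ln((1−α)^{n−1}/α^n) for n ≥ 1, and let φ : ℝ → ℝ be the indicator function of ⋃_{j=0}^∞ [t_{2j}, t_{2j+1}]. Define μ̃(t) = 8 ∫_0^t φ(τ) e^{−π²(t−τ)} dτ. Then μ̃(t_{2n+1}) = (8/π²)(1−α) for all n ≥ 0 and μ̃(t_{2n}) = (8/π²)α for all n ≥ 1. -/

import Mathlib

/-- With switching times `t₀ = 0`, `t_n = (1/π²) ln((1-α)^{n-1}/α^n)` and boundary value `φ`
the indicator of `⋃_j [t_{2j}, t_{2j+1}]`, the first-term approximate mass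
`μ̃(t) = 8 ∫_0^t φ(τ) e^{-π²(t-τ)} dτ` equals `M = (8/π²)(1-α)` at the odd switching times
and `m = (8/π²)α` at the even ones. -/
theorem firstTerm_mass_at_switches (α : ℝ) (hα0 : 0 < α) (hα : α < 1 / 2)
    (t : ℕ → ℝ) (ht0 : t 0 = 0)
    (ht : ∀ n : ℕ, 1 ≤ n →
      t n = (1 / Real.pi ^ 2) * Real.log ((1 - α) ^ (n - 1) / α ^ n))
    (φ : ℝ → ℝ)
    (hφ : φ = Set.indicator (⋃ j : ℕ, Set.Icc (t (2 * j)) (t (2 * j + 1)))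
      (fun _ => (1 : ℝ)))
    (μ : ℝ → ℝ)
    (hμ : μ = fun s => 8 * ∫ τ in (0 : ℝ)..s, φ τ * Real.exp (-Real.pi ^ 2 * (s - τ))) :
    (∀ n : ℕ, μ (t (2 * n + 1)) = (8 / Real.pi ^ 2) * (1 - α)) ∧
    (∀ n : ℕ, 1 ≤ n → μ (t (2 * n)) = (8 / Real.pi ^ 2) * α) := by
  set c : ℝ := Real.pi ^ 2 with hc
  have hc0 : 0 < c := by positivity
  have hcne : c ≠ 0 := ne_of_gt hc0
  have hα1 : α < 1 := by linarith
  have h1α : 0 < 1 - α := by linarith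
  -- exponential values at switching times
  have hE' : ∀ k : ℕ, Real.exp (c * t (k + 1)) = (1 - α) ^ k / α ^ (k + 1) := by
    intro k
    rw [ht (k + 1) (by omega)]
    have : c * (1 / c * Real.log ((1 - α) ^ (k + 1 - 1) / α ^ (k + 1)))
        = Real.log ((1 - α) ^ k / α ^ (k + 1)) := by
      field_simp
      rw [Nat.add_sub_cancel]
    rw [this, Real.exp_log (by positivity)]
  have hE0 : Real.exp (c * t 0) = 1 := by rw [ht0]; simp
  -- strict monotonicity of t
  have tmono : StrictMono t := by
    apply strictMono_nat_of_lt_succ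
    intro n
    have key : Real.exp (c * t n) < Real.exp (c * t (n + 1)) := by
      cases n with
      | zero =>
        rw [hE0, hE' 0]
        rw [pow_zero, pow_one]
        rw [one_div]
        exact (one_lt_inv₀ hα0).mpr hα1
      | succ m =>
        rw [hE' m, hE' (m + 1)]
        rw [div_lt_div_iff₀ (by positivity) (by positivity)]
        have hαlt : α < 1 - α := by linarith
        calc (1 - α) ^ m * α ^ (m + 1 + 1) = ((1 - α) ^ m * α ^ (m + 1)) * α := by ring
          _ < ((1 - α) ^ m * α ^ (m + 1)) * (1 - α) := by
              apply mul_lt_mul_of_pos_left hαlt (by positivity)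
          _ = (1 - α) ^ (m + 1) * α ^ (m + 1) := by ring
    have := Real.exp_lt_exp.mp key
    exact lt_of_mul_lt_mul_left this (le_of_lt hc0)
  have tmonotone : Monotone t := tmono.monotone
  -- values of φ
  have hUmeas : MeasurableSet (⋃ j : ℕ, Set.Icc (t (2 * j)) (t (2 * j + 1))) :=
    MeasurableSet.iUnion fun j => measurableSet_Icc
  have hφ1 : ∀ j : ℕ, ∀ x ∈ Set.Icc (t (2 * j)) (t (2 * j + 1)), φ x = 1 := by
    intro j x hx
    rw [hφ]
    exact Set.indicator_of_mem (Set.mem_iUnion.mpr ⟨j, hx⟩) _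
  have hφ0 : ∀ j : ℕ, ∀ x ∈ Set.Ioo (t (2 * j + 1)) (t (2 * j + 2)), φ x = 0 := by
    intro j x hx
    rw [hφ]
    apply Set.indicator_of_notMem
    intro hmem
    obtain ⟨i, hi1, hi2⟩ := Set.mem_iUnion.mp hmem
    rcases le_or_gt i j with h | h
    · have : t (2 * i + 1) ≤ t (2 * j + 1) := tmonotone (by omega)
      have := hi2.trans this
      linarith [hx.1]
    · have : t (2 * j + 2) ≤ t (2 * i) := tmonotone (by omega)
      have := this.trans hi1
      linarith [hx.2]
  have hφ01 : ∀ x, φ x = 0 ∨ φ x = 1 := by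
    intro x
    rw [hφ]
    by_cases hx : x ∈ ⋃ j : ℕ, Set.Icc (t (2 * j)) (t (2 * j + 1))
    · right; exact Set.indicator_of_mem hx _
    · left; exact Set.indicator_of_notMem hx _
  have hφmeas : Measurable φ := by
    rw [hφ]; exact measurable_const.indicator hUmeas
  -- the auxiliary integrand
  set f : ℝ → ℝ := fun τ => φ τ * Real.exp (c * τ) with hf
  have hfmeas : Measurable f := hφmeas.mul (Real.continuous_exp.comp (continuous_const.mul continuous_id)).measurable
  have hfint : ∀ a b : ℝ, IntervalIntegrable f MeasureTheory.volume a b := by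
    intro a b
    have hg : IntervalIntegrable (fun τ => Real.exp (c * τ)) MeasureTheory.volume a b :=
      (Real.continuous_exp.comp (continuous_const.mul continuous_id)).intervalIntegrable a b
    apply hg.mono_fun hfmeas.aestronglyMeasurable
    apply MeasureTheory.ae_of_all
    intro x
    simp only [hf, Real.norm_eq_abs, abs_mul]
    rcases hφ01 x with h | h <;> rw [h] <;> simp [abs_of_pos (Real.exp_pos _)] <;>
      positivity
  -- integral of exp(c τ)
  have hexpInt : ∀ a b : ℝ, (∫ τ in a..b, Real.exp (c * τ))
      = (Real.exp (c * b) - Real.exp (c * a)) / c := by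
    intro a b
    rw [intervalIntegral.integral_comp_mul_left (fun x => Real.exp x) hcne, integral_exp]
    rw [smul_eq_mul]
    field_simp
  -- integral over an "on" interval
  have hon : ∀ j : ℕ, (∫ τ in (t (2 * j))..(t (2 * j + 1)), f τ)
      = (Real.exp (c * t (2 * j + 1)) - Real.exp (c * t (2 * j))) / c := by
    intro j
    have hle : t (2 * j) ≤ t (2 * j + 1) := tmonotone (by omega)
    rw [← hexpInt]
    apply intervalIntegral.integral_congr
    intro x hx
    rw [Set.uIcc_of_le hle] at hx
    simp only [hf]
    rw [hφ1 j x hx, one_mul]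
  -- integral over an "off" interval
  have hoff : ∀ j : ℕ, (∫ τ in (t (2 * j + 1))..(t (2 * j + 2)), f τ) = 0 := by
    intro j
    have hle : t (2 * j + 1) ≤ t (2 * j + 2) := tmonotone (by omega)
    have : (∫ τ in (t (2 * j + 1))..(t (2 * j + 2)), f τ)
        = ∫ τ in (t (2 * j + 1))..(t (2 * j + 2)), (0 : ℝ) := by
      apply intervalIntegral.integral_congr_ae
      have hne : ∀ᵐ x ∂(MeasureTheory.volume : MeasureTheory.Measure ℝ),
          x ≠ t (2 * j + 2) := by
        have : (MeasureTheory.volume : MeasureTheory.Measure ℝ) {t (2 * j + 2)} = 0 :=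
          MeasureTheory.measure_singleton _
        filter_upwards [MeasureTheory.compl_mem_ae_iff.mpr this] with x hx
        exact hx
      filter_upwards [hne] with x hx hmem
      rw [Set.uIoc_of_le hle] at hmem
      have hxIoo : x ∈ Set.Ioo (t (2 * j + 1)) (t (2 * j + 2)) :=
        ⟨hmem.1, lt_of_le_of_ne hmem.2 hx⟩
      simp only [hf]
      rw [hφ0 j x hxIoo, zero_mul]
    rw [this, intervalIntegral.integral_zero]
  -- rewrite μ
  have hμ' : ∀ s : ℝ, μ s = 8 * (Real.exp (-(c * s)) * ∫ τ in (0:ℝ)..s, f τ) := by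
    intro s
    rw [hμ]
    simp only
    congr 1
    rw [← intervalIntegral.integral_const_mul]
    apply intervalIntegral.integral_congr
    intro x _
    simp only [hf]
    rw [show -c * (s - x) = -(c * s) + c * x by ring, Real.exp_add]
    ring
  -- key induction
  have key : ∀ n : ℕ, (∫ τ in (0:ℝ)..(t (2 * n + 1)), f τ)
      = (1 - α) * Real.exp (c * t (2 * n + 1)) / c := by
    intro n
    induction n with
    | zero =>
      have h0 : (∫ τ in (0:ℝ)..(t 1), f τ)
          = (Real.exp (c * t 1) - Real.exp (c * t 0)) / c := by
        have := hon 0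
        simpa [ht0] using this
      rw [show 2 * 0 + 1 = 1 by norm_num] at *
      rw [h0, hE0, hE' 0]
      rw [pow_zero, pow_one]
      field_simp
    | succ m ih =>
      have hsplit1 : (∫ τ in (0:ℝ)..(t (2 * m + 1)), f τ)
          + (∫ τ in (t (2 * m + 1))..(t (2 * m + 2)), f τ)
          = ∫ τ in (0:ℝ)..(t (2 * m + 2)), f τ :=
        intervalIntegral.integral_add_adjacent_intervals (hfint _ _) (hfint _ _)
      have hsplit2 : (∫ τ in (0:ℝ)..(t (2 * m + 2)), f τ)
          + (∫ τ in (t (2 * m + 2))..(t (2 * m + 3)), f τ)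
          = ∫ τ in (0:ℝ)..(t (2 * m + 3)), f τ :=
        intervalIntegral.integral_add_adjacent_intervals (hfint _ _) (hfint _ _)
      have honm : (∫ τ in (t (2 * m + 2))..(t (2 * m + 3)), f τ)
          = (Real.exp (c * t (2 * m + 3)) - Real.exp (c * t (2 * m + 2))) / c := by
        have := hon (m + 1)
        rw [show 2 * (m + 1) = 2 * m + 2 by ring, show 2 * m + 2 + 1 = 2 * m + 3 by ring] at this
        exact this
      have hgoal : (2 : ℕ) * (m + 1) + 1 = 2 * m + 3 := by ring
      rw [hgoal]
      rw [← hsplit2, ← hsplit1, hoff m, honm, ih]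
      rw [hE' (2 * m), hE' (2 * m + 1), hE' (2 * m + 2)]
      field_simp
      ring
  have goal1 : ∀ n : ℕ, μ (t (2 * n + 1)) = (8 / c) * (1 - α) := by
    intro n
    rw [hμ', key n]
    rw [show Real.exp (-(c * t (2 * n + 1))) = (Real.exp (c * t (2 * n + 1)))⁻¹ from
      Real.exp_neg _]
    have := Real.exp_pos (c * t (2 * n + 1))
    field_simp
  refine ⟨goal1, ?_⟩
  intro n hn
  obtain ⟨m, rfl⟩ : ∃ m, n = m + 1 := ⟨n - 1, by omega⟩
  have hsplit1 : (∫ τ in (0:ℝ)..(t (2 * m + 1)), f τ)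
      + (∫ τ in (t (2 * m + 1))..(t (2 * m + 2)), f τ)
      = ∫ τ in (0:ℝ)..(t (2 * m + 2)), f τ :=
    intervalIntegral.integral_add_adjacent_intervals (hfint _ _) (hfint _ _)
  have hval : (∫ τ in (0:ℝ)..(t (2 * m + 2)), f τ)
      = (1 - α) * Real.exp (c * t (2 * m + 1)) / c := by
    rw [← hsplit1, hoff m, key m, add_zero]
  rw [show 2 * (m + 1) = 2 * m + 2 by ring]
  rw [hμ', hval]
  rw [show Real.exp (-(c * t (2 * m + 2))) = (Real.exp (c * t (2 * m + 2)))⁻¹ from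
    Real.exp_neg _]
  rw [hE' (2 * m), hE' (2 * m + 1)]
  field_simp
  ring
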